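/- Suppose for each t > 0, φ_t(u) = ∫_0^∞ exp(Λ(t^α x)(e^{iu/Λ(t^α)} - 1)) h(x) dx where h is a probability density on (0,∞), Λ is nonnegative, measurable, Λ(s) → ∞ as s → ∞, and Λ(t^α x)/Λ(t^α) → x^β for all x > 0. Then φ_t(u) → ∫_0^∞ e^{iux^β} h(x) dx as t → ∞, for every u ∈ ℝ. -/

import Mathlib

open Filter MeasureTheory

lemma aux_k (u : ℝ) :
    Tendsto (fun N : ℝ => (N : ℂ) * (Complex.exp ((u : ℂ) / (N : ℂ) * Complex.I) - 1))
      atTop (nhds ((u : ℂ) * Complex.I)) := by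
  rcases eq_or_ne u 0 with rfl | hu
  · simpa using (tendsto_const_nhds : Tendsto (fun _ : ℝ => (0:ℂ)) atTop (nhds 0))
  · set c : ℂ := (u : ℂ) * Complex.I with hc
    have hcne : c ≠ 0 := by
      simp [hc, Complex.ofReal_eq_zero, hu, Complex.I_ne_zero]
    have hslope : Tendsto (fun w : ℂ => (Complex.exp w - 1) / w) (nhdsWithin 0 {0}ᶜ) (nhds 1) := by
      have := hasDerivAt_iff_tendsto_slope.mp (Complex.hasDerivAt_exp 0)
      simp only [Complex.exp_zero] at this
      refine this.congr fun w => ?_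
      simp [slope_def_field, div_eq_mul_inv]
    have h1 : Tendsto (fun N : ℝ => c / (N : ℂ)) atTop (nhdsWithin 0 {0}ᶜ) := by
      apply tendsto_nhdsWithin_of_tendsto_nhds_of_eventually_within
      · have : Tendsto (fun N : ℝ => ((N : ℝ)⁻¹ : ℝ)) atTop (nhds 0) := tendsto_inv_atTop_zero
        have h2 : Tendsto (fun N : ℝ => (((N : ℝ)⁻¹ : ℝ) : ℂ)) atTop (nhds 0) := by
          have := (Complex.continuous_ofReal.tendsto 0).comp this
          simpa [Function.comp_def, Complex.ofReal_inv] using this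
        have := h2.const_mul c
        simpa [Function.comp, div_eq_mul_inv, Complex.ofReal_inv] using this
      · filter_upwards [eventually_gt_atTop (0:ℝ)] with N hN
        simp only [Set.mem_compl_iff, Set.mem_singleton_iff]
        exact div_ne_zero hcne (by exact_mod_cast ne_of_gt hN)
    have hcomp : Tendsto (fun N : ℝ => (Complex.exp (c / N) - 1) / (c / N)) atTop (nhds 1) :=
      hslope.comp h1
    have := hcomp.const_mul c
    rw [mul_one] at this
    refine this.congr' ?_
    filter_upwards [eventually_gt_atTop (0:ℝ)] with N hN
    have hN' : (N : ℂ) ≠ 0 := by exact_mod_cast ne_of_gt hN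
    have hcN : c / (N : ℂ) ≠ 0 := div_ne_zero hcne hN'
    have harg : (u : ℂ) / (N : ℂ) * Complex.I = c / N := by
      rw [hc]; ring
    rw [harg]
    field_simp

/-- Dominated-convergence step in the scaling limit for the FNPP: if `Λ` is nonnegative,
measurable, `Λ(s) → ∞` as `s → ∞`, and `Λ(t^α x)/Λ(t^α) → x^β` for all `x > 0`, and `h`
is a probability density on `(0,∞)`, then
`φ_t(u) = ∫_0^∞ exp(Λ(t^α x)(e^{iu/Λ(t^α)} - 1)) h(x) dx → ∫_0^∞ e^{iux^β} h(x) dx`. -/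
theorem fnpp_charFun_scaling_limit
    (α β u : ℝ) (hα : α ∈ Set.Ioo (0 : ℝ) 1)
    (Λ : ℝ → ℝ) (hΛmeas : Measurable Λ) (hΛnn : ∀ s : ℝ, 0 ≤ Λ s)
    (hΛtop : Tendsto Λ atTop atTop)
    (hreg : ∀ x : ℝ, 0 < x →
      Tendsto (fun t : ℝ => Λ (t ^ α * x) / Λ (t ^ α)) atTop (nhds (x ^ β)))
    (h : ℝ → ℝ) (hhmeas : Measurable h) (hhnn : ∀ x, 0 ≤ h x)
    (hh1 : ∫ x in Set.Ioi (0 : ℝ), h x = 1) :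
    Tendsto
      (fun t : ℝ => ∫ x in Set.Ioi (0 : ℝ),
        Complex.exp ((Λ (t ^ α * x) : ℂ) *
          (Complex.exp ((u : ℂ) / (Λ (t ^ α) : ℂ) * Complex.I) - 1)) * (h x : ℂ))
      atTop
      (nhds (∫ x in Set.Ioi (0 : ℝ),
        Complex.exp ((u : ℂ) * ((x ^ β : ℝ) : ℂ) * Complex.I) * (h x : ℂ))) := by
  have hint : Integrable h (volume.restrict (Set.Ioi (0:ℝ))) := by
    by_contra hc
    rw [integral_undef hc] at hh1
    norm_num at hh1
  apply tendsto_integral_filter_of_dominated_convergence h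
  · filter_upwards with t
    apply Measurable.aestronglyMeasurable
    fun_prop
  · filter_upwards with t
    filter_upwards with x
    have hre : ((Λ (t ^ α * x) : ℂ) *
        (Complex.exp ((u : ℂ) / (Λ (t ^ α) : ℂ) * Complex.I) - 1)).re ≤ 0 := by
      have harg : (u : ℂ) / (Λ (t ^ α) : ℂ) * Complex.I
          = ((u / Λ (t ^ α) : ℝ) : ℂ) * Complex.I := by push_cast; ring
      rw [harg]
      rw [Complex.mul_re]
      simp only [Complex.ofReal_re, Complex.ofReal_im, zero_mul, sub_zero, Complex.sub_re,
        Complex.exp_ofReal_mul_I_re, Complex.one_re]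
      exact mul_nonpos_of_nonneg_of_nonpos (hΛnn _)
        (sub_nonpos.mpr (Real.cos_le_one _))
    calc ‖Complex.exp ((Λ (t ^ α * x) : ℂ) *
          (Complex.exp ((u : ℂ) / (Λ (t ^ α) : ℂ) * Complex.I) - 1)) * (h x : ℂ)‖
        = Real.exp (((Λ (t ^ α * x) : ℂ) *
          (Complex.exp ((u : ℂ) / (Λ (t ^ α) : ℂ) * Complex.I) - 1)).re) * |h x| := by
          rw [norm_mul, Complex.norm_exp, Complex.norm_real, Real.norm_eq_abs]
      _ ≤ 1 * h x := by
          rw [abs_of_nonneg (hhnn x)]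
          exact mul_le_mul_of_nonneg_right (Real.exp_le_one_iff.mpr hre) (hhnn x)
      _ = h x := one_mul _
  · exact hint
  · rw [ae_restrict_iff' measurableSet_Ioi]
    filter_upwards with x hx
    have hx0 : (0:ℝ) < x := hx
    have ht : Tendsto (fun t : ℝ => t ^ α) atTop atTop := tendsto_rpow_atTop hα.1
    have hΛt : Tendsto (fun t : ℝ => Λ (t ^ α)) atTop atTop := hΛtop.comp ht
    have hk : Tendsto (fun t : ℝ => (Λ (t ^ α) : ℂ) *
        (Complex.exp ((u : ℂ) / (Λ (t ^ α) : ℂ) * Complex.I) - 1)) atTop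
        (nhds ((u : ℂ) * Complex.I)) := (aux_k u).comp hΛt
    have hg : Tendsto (fun t : ℝ => ((Λ (t ^ α * x) / Λ (t ^ α) : ℝ) : ℂ)) atTop
        (nhds ((x ^ β : ℝ) : ℂ)) :=
      (Complex.continuous_ofReal.tendsto _).comp (hreg x hx0)
    have hz : Tendsto (fun t : ℝ => (Λ (t ^ α * x) : ℂ) *
        (Complex.exp ((u : ℂ) / (Λ (t ^ α) : ℂ) * Complex.I) - 1)) atTop
        (nhds (((x ^ β : ℝ) : ℂ) * ((u : ℂ) * Complex.I))) := by
      refine (hg.mul hk).congr' ?_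
      filter_upwards [hΛt.eventually_gt_atTop 0] with t htpos
      have hne : (Λ (t ^ α) : ℂ) ≠ 0 := by exact_mod_cast ne_of_gt htpos
      push_cast
      field_simp
    have := ((Complex.continuous_exp.tendsto _).comp hz).mul_const ((h x : ℂ))
    have heq : ((x ^ β : ℝ) : ℂ) * ((u : ℂ) * Complex.I)
        = (u : ℂ) * ((x ^ β : ℝ) : ℂ) * Complex.I := by ring
    rw [heq] at this
    exact this
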